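/- Let p be an odd prime, q a power of p, and let η be a normal basis generator of F_{q^{p^n}} over F_q with cyclic Galois group G of order p^n. Then R(η) = Σ_{g∈G} Tr(η·g(η))·g is a square in F_q[G]^×, and it has a square root w fixed by the involution J: g ↦ g^{-1}; moreover w^{-1}∘η is a self-dual normal basis generator of F_{q^{p^n}} over F_q. -/

import Mathlib

open scoped Classical

lemma aux_repr {E G : Type*} [Semiring E] [Monoid G] [Fintype G] (x : MonoidAlgebra E G) :
    x = ∑ g : G, MonoidAlgebra.single g (x.coeff g) := by
  ext t
  rw [MonoidAlgebra.coeff_sum, Finset.sum_apply']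
  simp [Finsupp.single_apply]

lemma aux_mul_apply {E G : Type*} [Semiring E] [Group G] [Fintype G]
    (x y : MonoidAlgebra E G) (t : G) :
    (x * y).coeff t = ∑ σ : G, x.coeff σ * y.coeff (σ⁻¹ * t) := by
  have h1 : x * y = ∑ σ : G, ∑ g : G,
      MonoidAlgebra.single (σ * g) (x.coeff σ * y.coeff g) := by
    calc x * y = (∑ σ : G, MonoidAlgebra.single σ (x.coeff σ)) *
        (∑ g : G, MonoidAlgebra.single g (y.coeff g)) := by rw [← aux_repr, ← aux_repr]
      _ = _ := by
          rw [Finset.sum_mul_sum]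
          exact Finset.sum_congr rfl fun σ _ => Finset.sum_congr rfl fun g _ => by
            rw [MonoidAlgebra.single_mul_single]
  rw [h1, MonoidAlgebra.coeff_sum, Finset.sum_apply']
  refine Finset.sum_congr rfl fun σ _ => ?_
  rw [MonoidAlgebra.coeff_sum, Finset.sum_apply']
  rw [Finset.sum_eq_single (σ⁻¹ * t)]
  · simp [Finsupp.single_apply]
  · intro g _ hg
    rw [MonoidAlgebra.coeff_single, Finsupp.single_apply, if_neg]
    intro h; exact hg (by rw [← h]; group)
  · simp

lemma aux_frob {E G : Type*} [Field E] [CommGroup G] [Fintype G]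
    {p n : ℕ} [Fact p.Prime] [CharP E p] (hcard : Fintype.card G = p ^ n)
    (y : MonoidAlgebra E G) :
    y ^ (p ^ n) = MonoidAlgebra.single 1 ((∑ g : G, y.coeff g) ^ (p ^ n)) := by
  haveI : CharP (MonoidAlgebra E G) p := by
    refine charP_of_injective_ringHom (f := algebraMap E (MonoidAlgebra E G)) ?_ p
    intro a b hab
    have : MonoidAlgebra.single (1 : G) a = MonoidAlgebra.single 1 b := by
      simpa [MonoidAlgebra.coe_algebraMap] using hab
    have := congrArg (fun x => x.coeff 1) this
    simpa using this
  haveI : ExpChar (MonoidAlgebra E G) p := ExpChar.prime Fact.out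
  haveI : ExpChar E p := ExpChar.prime Fact.out
  calc y ^ (p ^ n) = iterateFrobenius (MonoidAlgebra E G) p n y := by
        rw [iterateFrobenius_def]
    _ = ∑ g : G, iterateFrobenius (MonoidAlgebra E G) p n (MonoidAlgebra.single g (y.coeff g)) := by
        conv_lhs => rw [aux_repr y]
        rw [map_sum]
    _ = ∑ g : G, MonoidAlgebra.single (1 : G) ((y.coeff g) ^ (p ^ n)) := by
        refine Finset.sum_congr rfl fun g _ => ?_
        rw [iterateFrobenius_def, MonoidAlgebra.single_pow, ← hcard, pow_card_eq_one]
    _ = MonoidAlgebra.single (1 : G) (∑ g : G, (y.coeff g) ^ (p ^ n)) := by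
        simp only [← MonoidAlgebra.ofCoeff_single, ← MonoidAlgebra.ofCoeff_sum, Finsupp.single_finset_sum]
    _ = _ := by
        rw [sum_pow_char_pow]


lemma aux_exists_pow {E F : Type*} [Field E] [Field F] [Finite F] [Algebra E F]
    (g : F ≃ₐ[E] F) : ∃ k : ℕ, 0 < k ∧ ∀ x : F, g x = x ^ k := by
  haveI : Fintype F := Fintype.ofFinite F
  obtain ⟨ξ, hξ⟩ := IsCyclic.exists_generator (α := Fˣ)
  set gu : Fˣ →* Fˣ := Units.map (g : F →+* F).toMonoidHom with hgu
  obtain ⟨k, hk⟩ : ∃ k : ℕ, gu ξ = ξ ^ k := by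
    obtain ⟨k, hk⟩ := (mem_powers_iff_mem_zpowers.2 (hξ (gu ξ)))
    exact ⟨k, hk.symm⟩
  have hop : 0 < orderOf ξ := orderOf_pos ξ
  have hpos : 0 < k + orderOf ξ := Nat.lt_of_lt_of_le hop (Nat.le_add_left _ _)
  refine ⟨k + orderOf ξ, hpos, fun x => ?_⟩
  have hξord : ξ ^ (k + orderOf ξ) = ξ ^ k := by
    rw [pow_add, pow_orderOf_eq_one, mul_one]
  rcases eq_or_ne x 0 with rfl | hx
  · rw [map_zero, zero_pow hpos.ne']
  · lift x to Fˣ using isUnit_iff_ne_zero.2 hx with xu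
    obtain ⟨m, hm⟩ := (mem_powers_iff_mem_zpowers.2 (hξ xu))
    have h3 : gu xu = xu ^ (k + orderOf ξ) := by
      rw [← hm]
      show gu (ξ ^ m) = (ξ ^ m) ^ (k + orderOf ξ)
      rw [map_pow, hk, ← hξord, ← pow_mul, ← pow_mul, mul_comm]
    have h2 := congrArg (Units.val) h3
    simpa [hgu] using h2

lemma aux_comm {E F : Type*} [Field E] [Field F] [Finite F] [Algebra E F]
    (g h : F ≃ₐ[E] F) : g * h = h * g := by
  obtain ⟨k, -, hk⟩ := aux_exists_pow g
  obtain ⟨l, -, hl⟩ := aux_exists_pow h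
  ext x
  rw [AlgEquiv.mul_apply, AlgEquiv.mul_apply, hk, hl, hk, hl, ← pow_mul, ← pow_mul, mul_comm]

lemma aux_grp1 {G : Type*} [CommGroup G] (s t g h : G) :
    (g * s)⁻¹ * (h * t⁻¹) = t⁻¹ * (s⁻¹ * (g⁻¹ * h)) := by
  rw [mul_inv_rev]
  simp only [mul_comm, mul_left_comm, mul_assoc]


noncomputable def auxCommGroup (E F : Type*) [Field E] [Field F] [Finite F] [Algebra E F] :
    CommGroup (F ≃ₐ[E] F) :=
  { (inferInstance : Group (F ≃ₐ[E] F)) with mul_comm := aux_comm }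


/-- Let `p` be an odd prime, `q` a power of `p`, and `η` a normal basis
generator of `F_{q^{p^n}}/F_q` with Galois group `G` (cyclic of order `p^n`). Then
`R(η) = Σ_g Tr(η·g(η))·g` is a square in `F_q[G]ˣ` with a square root `w` fixed by the
involution `J : g ↦ g⁻¹`, and `w⁻¹ ∘ η` is a self-dual normal basis generator. -/
theorem stmt_9 (p n : ℕ) [Fact p.Prime] (hp : Odd p)
    (E F : Type*) [Field E] [Field F] [Fintype E] [Fintype F]
    [Algebra E F] [IsGalois E F] [CharP E p]
    (hdeg : Module.finrank E F = p ^ n)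
    (η : F) (b : Module.Basis (F ≃ₐ[E] F) E F) (hb : ∀ g : F ≃ₐ[E] F, b g = g η) :
    ∃ w : (MonoidAlgebra E (F ≃ₐ[E] F))ˣ,
      (w : MonoidAlgebra E (F ≃ₐ[E] F)) * (w : MonoidAlgebra E (F ≃ₐ[E] F)) =
        (∑ g : F ≃ₐ[E] F, MonoidAlgebra.single g (Algebra.trace E F (η * g η))) ∧
      (∀ g : F ≃ₐ[E] F,
        (w : MonoidAlgebra E (F ≃ₐ[E] F)).coeff g⁻¹ = (w : MonoidAlgebra E (F ≃ₐ[E] F)).coeff g) ∧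
      ∀ g h : F ≃ₐ[E] F,
        Algebra.trace E F
            (g (∑ σ : F ≃ₐ[E] F,
                ((w⁻¹ : (MonoidAlgebra E (F ≃ₐ[E] F))ˣ) : MonoidAlgebra E (F ≃ₐ[E] F)).coeff σ • σ η) *
             h (∑ σ : F ≃ₐ[E] F,
                ((w⁻¹ : (MonoidAlgebra E (F ≃ₐ[E] F))ˣ) : MonoidAlgebra E (F ≃ₐ[E] F)).coeff σ • σ η)) =
          if g = h then 1 else 0 := by
  classical
  haveI : FiniteDimensional E F := Module.Finite.of_basis b
  set a : (F ≃ₐ[E] F) → E := fun g => Algebra.trace E F (η * g η) with ha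
  set Rel : MonoidAlgebra E (F ≃ₐ[E] F) := ∑ g : F ≃ₐ[E] F, MonoidAlgebra.single g (a g)
    with hRdef
  have hcard : Fintype.card (F ≃ₐ[E] F) = p ^ n := by
    rw [← Nat.card_eq_fintype_card, IsGalois.card_aut_eq_finrank, hdeg]
  have hMAcomm : ∀ u v : MonoidAlgebra E (F ≃ₐ[E] F), u * v = v * u := by
    letI := auxCommGroup E F
    exact fun u v => mul_comm u v
  -- trace invariance
  have htr : ∀ (g : F ≃ₐ[E] F) (x : F), Algebra.trace E F (g x) = Algebra.trace E F x := by
    intro g x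
    apply (algebraMap E F).injective
    rw [trace_eq_sum_automorphisms, trace_eq_sum_automorphisms]
    exact Fintype.sum_equiv (Equiv.mulRight g) _ _
      (fun σ => (AlgEquiv.mul_apply σ g x).symm)
  have hL1 : ∀ u v : F ≃ₐ[E] F, Algebra.trace E F (u η * v η) = a (u⁻¹ * v) := by
    intro u v
    have h1 : η * (u⁻¹ * v) η = u⁻¹ (u η * v η) := by
      rw [map_mul]
      congr 1
      rw [← AlgEquiv.mul_apply, inv_mul_cancel, AlgEquiv.one_apply]
    show _ = Algebra.trace E F (η * (u⁻¹ * v) η)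
    rw [h1, htr]
  have hsymm : ∀ g : F ≃ₐ[E] F, a g⁻¹ = a g := by
    intro g
    have h1 := hL1 g 1
    simp only [AlgEquiv.one_apply, mul_one] at h1
    rw [← h1, ha]
    simp only [mul_comm]
  have hRelapp : ∀ g : F ≃ₐ[E] F, Rel.coeff g = a g := by
    intro g
    rw [hRdef, MonoidAlgebra.coeff_sum, Finset.sum_apply']
    rw [Finset.sum_eq_single g]
    · simp [Finsupp.single_apply]
    · intro t _ ht
      rw [MonoidAlgebra.coeff_single, Finsupp.single_apply, if_neg ht]
    · simp
  -- action-trace-pairing formula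
  have hTDsum : ∀ (c : MonoidAlgebra E (F ≃ₐ[E] F)) (g : F ≃ₐ[E] F),
      Algebra.trace E F ((∑ σ : F ≃ₐ[E] F, c.coeff σ • σ η) * g η) = (c * Rel).coeff g := by
    intro c g
    rw [Finset.sum_mul, map_sum, aux_mul_apply]
    refine Finset.sum_congr rfl fun σ _ => ?_
    rw [smul_mul_assoc, map_smul, smul_eq_mul, hL1, hRelapp]
  -- injectivity of multiplication by Rel
  have hz : ∀ z : F, z = ∑ g1 : F ≃ₐ[E] F, b.repr z g1 • g1 η := by
    intro z
    have h := b.sum_repr z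
    conv_lhs => rw [← h]
    exact Finset.sum_congr rfl fun g1 _ => by rw [hb]
  have hinj : ∀ c : MonoidAlgebra E (F ≃ₐ[E] F), c * Rel = 0 → c = 0 := by
    intro c hc
    have hy0 : (∑ σ : F ≃ₐ[E] F, c.coeff σ • σ η) = 0 := by
      refine (traceForm_nondegenerate E F).1 _ (fun z => ?_)
      rw [Algebra.traceForm_apply]
      conv_lhs => rw [hz z]
      rw [Finset.mul_sum, map_sum]
      refine Finset.sum_eq_zero fun g1 _ => ?_
      rw [mul_smul_comm, map_smul, hTDsum, hc]
      simp
    have h0 := Fintype.linearIndependent_iff.mp b.linearIndependent (fun σ => c.coeff σ) ?_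
    · ext σ
      exact h0 σ
    · rw [show (∑ σ : F ≃ₐ[E] F, c.coeff σ • b σ) = ∑ σ : F ≃ₐ[E] F, c.coeff σ • σ η from
        Finset.sum_congr rfl fun σ _ => by rw [hb]]
      exact hy0
  -- Rel is a unit
  haveI : Finite (MonoidAlgebra E (F ≃ₐ[E] F)) :=
    Finite.of_injective _ MonoidAlgebra.coeff_injective
  have hsurj : Function.Surjective (fun z : MonoidAlgebra E (F ≃ₐ[E] F) => Rel * z) := by
    apply Finite.injective_iff_surjective.mp
    intro u v huv
    have h1 : (u - v) * Rel = 0 := by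
      rw [sub_mul, hMAcomm u, hMAcomm v]
      simpa [sub_eq_zero] using huv
    have := hinj _ h1
    exact sub_eq_zero.mp this
  obtain ⟨xinv, hxinv⟩ := hsurj 1
  have hxinv1 : Rel * xinv = 1 := hxinv
  have hxinv2 : xinv * Rel = 1 := by rw [hMAcomm]; exact hxinv1
  let ur : (MonoidAlgebra E (F ≃ₐ[E] F))ˣ := ⟨Rel, xinv, hxinv1, hxinv2⟩
  -- the Frobenius identity
  have hkey : Rel ^ (p ^ n) =
      MonoidAlgebra.single 1 ((∑ g : F ≃ₐ[E] F, Rel.coeff g) ^ (p ^ n)) := by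
    letI := auxCommGroup E F
    exact aux_frob hcard Rel
  have hsum : (∑ g : F ≃ₐ[E] F, Rel.coeff g) = Algebra.trace E F η * Algebra.trace E F η := by
    have e1 : (∑ g : F ≃ₐ[E] F, Rel.coeff g) = ∑ g : F ≃ₐ[E] F, a g :=
      Finset.sum_congr rfl fun g _ => hRelapp g
    rw [e1]
    calc ∑ g : F ≃ₐ[E] F, a g
        = Algebra.trace E F (η * ∑ g : F ≃ₐ[E] F, g η) := by
          rw [Finset.mul_sum, map_sum]
      _ = Algebra.trace E F (η * algebraMap E F (Algebra.trace E F η)) := by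
          rw [← trace_eq_sum_automorphisms]
      _ = Algebra.trace E F η * Algebra.trace E F η := by
          rw [mul_comm η, ← Algebra.smul_def, map_smul, smul_eq_mul]
  set d : E := (Algebra.trace E F η) ^ (p ^ n) with hd
  have hdd : Rel ^ (p ^ n) = MonoidAlgebra.single 1 (d * d) := by
    rw [hkey, hsum, hd, mul_pow]
  have hd0 : d ≠ 0 := by
    intro h0
    have h1 : ((ur : MonoidAlgebra E (F ≃ₐ[E] F))) ^ (p ^ n) = 0 := by
      show Rel ^ (p ^ n) = 0
      rw [hdd, h0, zero_mul]
      simp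
    have h2 : ((ur ^ (p ^ n) : (MonoidAlgebra E (F ≃ₐ[E] F))ˣ) :
        MonoidAlgebra E (F ≃ₐ[E] F)) = 0 := by
      rw [Units.val_pow_eq_pow_val, h1]
    have h4 : (1 : MonoidAlgebra E (F ≃ₐ[E] F)) = 0 := by
      have h5 : ((ur ^ (p ^ n)) * (ur ^ (p ^ n))⁻¹ :
          (MonoidAlgebra E (F ≃ₐ[E] F))ˣ) = 1 := mul_inv_cancel _
      calc (1 : MonoidAlgebra E (F ≃ₐ[E] F))
          = ((ur ^ (p ^ n) : (MonoidAlgebra E (F ≃ₐ[E] F))ˣ) : MonoidAlgebra E (F ≃ₐ[E] F)) *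
            (((ur ^ (p ^ n))⁻¹ : (MonoidAlgebra E (F ≃ₐ[E] F))ˣ) :
              MonoidAlgebra E (F ≃ₐ[E] F)) := by
            rw [← Units.val_mul, h5, Units.val_one]
        _ = 0 := by rw [h2, zero_mul]
    exact one_ne_zero h4
  let du : (MonoidAlgebra E (F ≃ₐ[E] F))ˣ :=
    ⟨MonoidAlgebra.single 1 d, MonoidAlgebra.single 1 d⁻¹,
      by rw [MonoidAlgebra.single_mul_single, one_mul, mul_inv_cancel₀ hd0]; rfl,
      by rw [MonoidAlgebra.single_mul_single, one_mul, inv_mul_cancel₀ hd0]; rfl⟩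
  obtain ⟨m, hm⟩ := hp.pow (n := n)
  let w : (MonoidAlgebra E (F ≃ₐ[E] F))ˣ := du * (ur⁻¹) ^ m
  have hUcomm : ∀ u v : (MonoidAlgebra E (F ≃ₐ[E] F))ˣ, u * v = v * u := fun u v =>
    Units.ext (by rw [Units.val_mul, Units.val_mul, hMAcomm])
  have hdu2 : du * du = ur ^ (p ^ n) := by
    refine Units.ext ?_
    show MonoidAlgebra.single 1 d * MonoidAlgebra.single 1 d = _
    rw [Units.val_pow_eq_pow_val]
    show _ = Rel ^ (p ^ n)
    rw [MonoidAlgebra.single_mul_single, one_mul, hdd]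
  have hww : w * w = ur := by
    show (du * (ur⁻¹) ^ m) * (du * (ur⁻¹) ^ m) = ur
    rw [mul_assoc, ← mul_assoc ((ur⁻¹) ^ m), hUcomm ((ur⁻¹) ^ m) du, mul_assoc,
      ← mul_assoc, hdu2, ← pow_add, inv_pow, hm]
    rw [show 2 * m + 1 = (m + m) + 1 by ring, pow_succ]
    rw [hUcomm (ur ^ (m + m)) ur, mul_assoc, mul_inv_cancel, mul_one]
  -- the involution J
  obtain ⟨Jh, hJh⟩ : ∃ f : (F ≃ₐ[E] F) →* (F ≃ₐ[E] F), ∀ g : F ≃ₐ[E] F, f g = g⁻¹ := by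
    letI := auxCommGroup E F
    exact ⟨invMonoidHom, fun g => rfl⟩
  have hJhinj : Function.Injective Jh := by
    intro s t hst
    rw [hJh, hJh] at hst
    exact inv_injective hst
  let J : MonoidAlgebra E (F ≃ₐ[E] F) →+* MonoidAlgebra E (F ≃ₐ[E] F) :=
    MonoidAlgebra.mapDomainRingHom E Jh
  have hJapp : ∀ (y : MonoidAlgebra E (F ≃ₐ[E] F)) (g : F ≃ₐ[E] F), (J y).coeff g = y.coeff g⁻¹ := by
    intro y g
    show Finsupp.mapDomain Jh y.coeff g = y.coeff g⁻¹
    conv_lhs => rw [show g = Jh g⁻¹ by rw [hJh, inv_inv]]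
    rw [Finsupp.mapDomain_apply hJhinj]
  have hJRel : J Rel = Rel := by
    ext t
    rw [hJapp, hRelapp, hRelapp, hsymm]
  have hJur : Units.map (J : MonoidAlgebra E (F ≃ₐ[E] F) →+* _).toMonoidHom ur = ur :=
    Units.ext hJRel
  have hJdu : Units.map (J : MonoidAlgebra E (F ≃ₐ[E] F) →+* _).toMonoidHom du = du := by
    refine Units.ext ?_
    show J (MonoidAlgebra.single 1 d) = MonoidAlgebra.single 1 d
    show MonoidAlgebra.mapDomain Jh (MonoidAlgebra.single 1 d) = _
    rw [MonoidAlgebra.mapDomain_single, hJh, inv_one]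
  have hJw : Units.map (J : MonoidAlgebra E (F ≃ₐ[E] F) →+* _).toMonoidHom w = w := by
    show Units.map _ (du * (ur⁻¹) ^ m) = du * (ur⁻¹) ^ m
    rw [map_mul, map_pow, map_inv, hJur, hJdu]
  have hJwE : J (w : MonoidAlgebra E (F ≃ₐ[E] F)) = (w : MonoidAlgebra E (F ≃ₐ[E] F)) :=
    congrArg Units.val hJw
  have hJwinv : Units.map (J : MonoidAlgebra E (F ≃ₐ[E] F) →+* _).toMonoidHom w⁻¹ = w⁻¹ := by
    rw [map_inv, hJw]
  have hJxE : J ((w⁻¹ : (MonoidAlgebra E (F ≃ₐ[E] F))ˣ) : MonoidAlgebra E (F ≃ₐ[E] F)) =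
      ((w⁻¹ : (MonoidAlgebra E (F ≃ₐ[E] F))ˣ) : MonoidAlgebra E (F ≃ₐ[E] F)) :=
    congrArg Units.val hJwinv
  refine ⟨w, ?_, ?_, ?_⟩
  · show _ = Rel
    rw [← Units.val_mul, hww]
  · intro g
    conv_lhs => rw [← hJapp, hJwE]
  · intro g h
    set x : MonoidAlgebra E (F ≃ₐ[E] F) :=
      ((w⁻¹ : (MonoidAlgebra E (F ≃ₐ[E] F))ˣ) : MonoidAlgebra E (F ≃ₐ[E] F)) with hxdef
    have hxsym : ∀ σ : F ≃ₐ[E] F, x.coeff σ⁻¹ = x.coeff σ := by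
      intro σ
      rw [← hJapp, hxdef, hJxE]
    have hxx : x * x * Rel = 1 := by
      have hu : w⁻¹ * w⁻¹ * ur = 1 := by
        rw [← hww]
        group
      calc x * x * Rel
          = ((w⁻¹ * w⁻¹ * ur : (MonoidAlgebra E (F ≃ₐ[E] F))ˣ) :
              MonoidAlgebra E (F ≃ₐ[E] F)) := by
            rw [Units.val_mul, Units.val_mul]
        _ = 1 := by rw [hu, Units.val_one]
    have hgrp : ∀ s t : F ≃ₐ[E] F,
        (g * s)⁻¹ * (h * t⁻¹) = t⁻¹ * (s⁻¹ * (g⁻¹ * h)) := by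
      letI := auxCommGroup E F
      exact fun s t => aux_grp1 s t g h
    have hstep1 : ∀ u : F ≃ₐ[E] F,
        u (∑ σ : F ≃ₐ[E] F, x.coeff σ • σ η) = ∑ σ : F ≃ₐ[E] F, x.coeff σ • (u * σ) η := by
      intro u
      rw [map_sum]
      exact Finset.sum_congr rfl fun σ _ => by rw [map_smul, ← AlgEquiv.mul_apply]
    calc (Algebra.trace E F
          (g (∑ σ : F ≃ₐ[E] F, x.coeff σ • σ η) * h (∑ σ : F ≃ₐ[E] F, x.coeff σ • σ η)))
        = ∑ σ : F ≃ₐ[E] F, ∑ τ : F ≃ₐ[E] F, x.coeff σ * x.coeff τ * a ((g * σ)⁻¹ * (h * τ)) := by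
          rw [hstep1 g, hstep1 h, Finset.sum_mul_sum, map_sum]
          refine Finset.sum_congr rfl fun σ _ => ?_
          rw [map_sum]
          refine Finset.sum_congr rfl fun τ _ => ?_
          rw [smul_mul_smul_comm, map_smul, smul_eq_mul, hL1]
      _ = ∑ σ : F ≃ₐ[E] F, ∑ τ : F ≃ₐ[E] F,
            x.coeff σ * (x.coeff τ * a (τ⁻¹ * (σ⁻¹ * (g⁻¹ * h)))) := by
          refine Finset.sum_congr rfl fun σ _ => ?_
          rw [← Equiv.sum_comp (Equiv.inv (F ≃ₐ[E] F))
            (fun τ => x.coeff σ * x.coeff τ * a ((g * σ)⁻¹ * (h * τ)))]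
          refine Finset.sum_congr rfl fun τ _ => ?_
          simp only [Equiv.inv_apply]
          rw [hxsym, hgrp, mul_assoc]
      _ = (x * x * Rel).coeff (g⁻¹ * h) := by
          refine Eq.symm ?_
          rw [aux_mul_apply]
          have e1 : ∀ ρ : F ≃ₐ[E] F, (x * x).coeff ρ * Rel.coeff (ρ⁻¹ * (g⁻¹ * h)) =
              ∑ τ : F ≃ₐ[E] F, x.coeff τ * x.coeff (τ⁻¹ * ρ) * a (ρ⁻¹ * (g⁻¹ * h)) := by
            intro ρ
            rw [aux_mul_apply, hRelapp, Finset.sum_mul]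
          rw [Finset.sum_congr rfl fun ρ _ => e1 ρ, Finset.sum_comm]
          refine Finset.sum_congr rfl fun σ _ => ?_
          rw [← Equiv.sum_comp (Equiv.mulLeft σ)
            (fun ρ => x.coeff σ * x.coeff (σ⁻¹ * ρ) * a (ρ⁻¹ * (g⁻¹ * h)))]
          refine Finset.sum_congr rfl fun κ _ => ?_
          simp only [Equiv.coe_mulLeft]
          rw [inv_mul_cancel_left, mul_inv_rev, mul_assoc, mul_assoc]
      _ = if g = h then 1 else 0 := by
          rw [hxx]
          rw [show (1 : MonoidAlgebra E (F ≃ₐ[E] F)) = MonoidAlgebra.single 1 1 from rfl,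
            MonoidAlgebra.coeff_single, Finsupp.single_apply]
          by_cases hgh : g = h
          · rw [if_pos hgh, if_pos (by rw [hgh, inv_mul_cancel])]
          · rw [if_neg hgh, if_neg (fun hc => hgh (inv_mul_eq_one.mp hc.symm))]
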